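/- A dichotomous profile P satisfies WSC if and only if there exist three votes u, v, w such that (1) every vote of P induces the same dichotomous weak order as one of u, v, w, and (2) the dichotomous weak order of v equals that of u ∩ w or that of u ∪ w. -/

import Mathlib

set_option maxHeartbeats 1600000
set_option linter.unusedSectionVars false
set_option linter.unreachableTactic false
set_option linter.unusedTactic false
set_option linter.unnecessarySeqFocus false
set_option linter.unusedVariables false



open Finset Function

variable {C : Type*} [Fintype C] [DecidableEq C]

/-- All voters satisfying `S` come strictly before all voters satisfying `T`. -/
def Before {n : ℕ} (σ : Fin n → ℝ) (S T : Fin n → Prop) : Prop :=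
  ∀ i j, S i → T j → σ i < σ j

/-- The voter ordering induced by `σ` witnesses VEI: for every candidate,
the set of approving voters is a prefix or a suffix. -/
def IsVEIOrder {n : ℕ} (P : Fin n → Finset C) (σ : Fin n → ℝ) : Prop :=
  ∀ c : C, (∃ t : ℝ, ∀ i, c ∈ P i ↔ σ i ≤ t) ∨ (∃ t : ℝ, ∀ i, c ∈ P i ↔ t ≤ σ i)

/-- Voter Extremal Interval. -/
def VEI {n : ℕ} (P : Fin n → Finset C) : Prop :=
  ∃ σ : Fin n → ℝ, Injective σ ∧ IsVEIOrder P σ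

/-- The candidate ordering induced by `pos` witnesses CEI: every vote is a
prefix or a suffix of the candidate ordering. -/
def IsCEIOrder {n : ℕ} (P : Fin n → Finset C) (pos : C → ℝ) : Prop :=
  ∀ i, (∃ t : ℝ, ∀ c : C, c ∈ P i ↔ pos c ≤ t) ∨ (∃ t : ℝ, ∀ c : C, c ∈ P i ↔ t ≤ pos c)

/-- Candidate Extremal Interval. -/
def CEI {n : ℕ} (P : Fin n → Finset C) : Prop :=
  ∃ pos : C → ℝ, Injective pos ∧ IsCEIOrder P pos

/-- Voter Interval: voters can be ordered so that the approvers of each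
candidate form a contiguous interval. -/
def VI {n : ℕ} (P : Fin n → Finset C) : Prop :=
  ∃ σ : Fin n → ℝ, Injective σ ∧
    ∀ c : C, ∃ lo hi : ℝ, ∀ i, c ∈ P i ↔ lo ≤ σ i ∧ σ i ≤ hi

/-- Candidate Interval: candidates can be ordered so that every vote forms a
contiguous interval. -/
def CI {n : ℕ} (P : Fin n → Finset C) : Prop :=
  ∃ pos : C → ℝ, Injective pos ∧
    ∀ i, ∃ lo hi : ℝ, ∀ c : C, c ∈ P i ↔ lo ≤ pos c ∧ pos c ≤ hi

/-- Dichotomous Uniformly Euclidean. -/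
def DUE {n : ℕ} (P : Fin n → Finset C) : Prop :=
  ∃ (ρv : Fin n → ℝ) (ρc : C → ℝ) (r : ℝ), 0 ≤ r ∧
    ∀ i, ∀ c : C, c ∈ P i ↔ |ρv i - ρc c| ≤ r

/-- Dichotomous Euclidean (individual radii). -/
def DE {n : ℕ} (P : Fin n → Finset C) : Prop :=
  ∃ (ρv : Fin n → ℝ) (ρc : C → ℝ) (r : Fin n → ℝ), (∀ i, 0 ≤ r i) ∧
    ∀ i, ∀ c : C, c ∈ P i ↔ |ρv i - ρc c| ≤ r i

/-- Weakly single-crossing: voters can be ordered so that for each pair of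
candidates `a, b`, the votes approving `a` but not `b`, the remaining votes,
and the votes approving `b` but not `a` appear as three consecutive blocks
(in this or the reverse order). -/
def WSC {n : ℕ} (P : Fin n → Finset C) : Prop :=
  ∃ σ : Fin n → ℝ, Injective σ ∧
    ∀ a b : C,
      (Before σ (fun i => a ∈ P i ∧ b ∉ P i)
         (fun i => ¬(a ∈ P i ∧ b ∉ P i) ∧ ¬(b ∈ P i ∧ a ∉ P i)) ∧
       Before σ (fun i => ¬(a ∈ P i ∧ b ∉ P i) ∧ ¬(b ∈ P i ∧ a ∉ P i))
         (fun i => b ∈ P i ∧ a ∉ P i) ∧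
       Before σ (fun i => a ∈ P i ∧ b ∉ P i) (fun i => b ∈ P i ∧ a ∉ P i)) ∨
      (Before σ (fun i => b ∈ P i ∧ a ∉ P i)
         (fun i => ¬(a ∈ P i ∧ b ∉ P i) ∧ ¬(b ∈ P i ∧ a ∉ P i)) ∧
       Before σ (fun i => ¬(a ∈ P i ∧ b ∉ P i) ∧ ¬(b ∈ P i ∧ a ∉ P i))
         (fun i => a ∈ P i ∧ b ∉ P i) ∧
       Before σ (fun i => b ∈ P i ∧ a ∉ P i) (fun i => a ∈ P i ∧ b ∉ P i))

/-- Seemingly single-crossing. -/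
def SSC {n : ℕ} (P : Fin n → Finset C) : Prop :=
  ∃ σ : Fin n → ℝ, Injective σ ∧
    ∀ a b : C,
      Before σ (fun i => a ∈ P i ∧ b ∉ P i) (fun i => b ∈ P i ∧ a ∉ P i) ∨
      Before σ (fun i => b ∈ P i ∧ a ∉ P i) (fun i => a ∈ P i ∧ b ∉ P i)

/-- 2-partition profile: exactly two distinct votes occur, and they
partition the candidate set. -/
def TwoPart {n : ℕ} (P : Fin n → Finset C) : Prop :=
  ∃ v v' : Finset C, v ≠ v' ∧ v ∩ v' = ∅ ∧ v ∪ v' = Finset.univ ∧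
    (∀ i, P i = v ∨ P i = v') ∧ (∃ i, P i = v) ∧ (∃ i, P i = v')

/-- Partition profile: the distinct votes are nonempty, pairwise disjoint,
and cover the candidate set. -/
def PartitionProfile {n : ℕ} (P : Fin n → Finset C) : Prop :=
  (∀ i, (P i).Nonempty) ∧ (∀ c : C, ∃ i, c ∈ P i) ∧
  (∀ i j, P i = P j ∨ Disjoint (P i) (P j))

/-- The linear order given by ranking function `r` (higher is better)
refines the approval vote `v`. -/
def Refines (r : C → ℝ) (v : Finset C) : Prop :=
  ∀ a b : C, a ∈ v → b ∉ v → r b < r a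

/-- The linear order given by `r` is single-peaked with respect to the axis
given by `pos`. -/
def SinglePeakedWrt (pos r : C → ℝ) : Prop :=
  ∀ a b c : C, ((pos a < pos b ∧ pos b < pos c) ∨ (pos c < pos b ∧ pos b < pos a)) →
    r b < r a → r c < r b

/-- The profile of linear orders given by the ranking functions `rank i` is
single-crossing: voters can be ordered so that for each pair of candidates
the set of voters preferring one to the other is a prefix. -/
def SingleCrossing {n : ℕ} (rank : Fin n → C → ℝ) : Prop :=
  ∃ σ : Fin n → ℝ, Injective σ ∧
    ∀ a b : C, ∀ i j, σ j < σ i → rank i b < rank i a → rank j b < rank j a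

/-- The profile of linear orders given by `rank` is 1-Euclidean with respect
to the embedding `ρv` of voters and `ρc` of candidates. -/
def IsEuclidean {n : ℕ} (rank : Fin n → C → ℝ) (ρv : Fin n → ℝ) (ρc : C → ℝ) : Prop :=
  ∀ i, ∀ a b : C, rank i b < rank i a ↔ |ρv i - ρc a| < |ρv i - ρc b|

/-- Possibly single-peaked. -/
def PSP {n : ℕ} (P : Fin n → Finset C) : Prop :=
  ∃ (rank : Fin n → C → ℝ) (pos : C → ℝ), Injective pos ∧
    (∀ i, Injective (rank i)) ∧ (∀ i, Refines (rank i) (P i)) ∧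
    (∀ i, SinglePeakedWrt pos (rank i))

/-- Possibly single-crossing. -/
def PSC {n : ℕ} (P : Fin n → Finset C) : Prop :=
  ∃ rank : Fin n → C → ℝ, (∀ i, Injective (rank i)) ∧
    (∀ i, Refines (rank i) (P i)) ∧ SingleCrossing rank

/-- Possibly Euclidean. -/
def PE {n : ℕ} (P : Fin n → Finset C) : Prop :=
  ∃ (rank : Fin n → C → ℝ) (ρv : Fin n → ℝ) (ρc : C → ℝ),
    (∀ i, Injective (rank i)) ∧ (∀ i, Refines (rank i) (P i)) ∧
    IsEuclidean rank ρv ρc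

/-- Two approval votes induce the same dichotomous weak order. -/
def SameWeakOrder (x y : Finset C) : Prop :=
  ∀ a b : C, (a ∈ x ∧ b ∉ x) ↔ (a ∈ y ∧ b ∉ y)

section A
variable {C : Type*} [Fintype C] [DecidableEq C]

def lab (s : Finset C) (a b : C) : ℤ :=
  if a ∈ s ∧ b ∉ s then 0 else if b ∈ s ∧ a ∉ s then 2 else 1

lemma lab_cases (s : Finset C) (a b : C) :
    (lab s a b = 0 ∧ (a ∈ s ∧ b ∉ s)) ∨
    (lab s a b = 1 ∧ (¬(a ∈ s ∧ b ∉ s) ∧ ¬(b ∈ s ∧ a ∉ s))) ∨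
    (lab s a b = 2 ∧ (b ∈ s ∧ a ∉ s)) := by
  unfold lab
  split_ifs with h1 h2
  · exact Or.inl ⟨rfl, h1⟩
  · exact Or.inr (Or.inr ⟨rfl, h2⟩)
  · exact Or.inr (Or.inl ⟨rfl, h1, h2⟩)

abbrev Cond {n : ℕ} (P : Fin n → Finset C) (σ : Fin n → ℝ) : Prop :=
  ∀ a b : C,
      (Before σ (fun i => a ∈ P i ∧ b ∉ P i)
         (fun i => ¬(a ∈ P i ∧ b ∉ P i) ∧ ¬(b ∈ P i ∧ a ∉ P i)) ∧
       Before σ (fun i => ¬(a ∈ P i ∧ b ∉ P i) ∧ ¬(b ∈ P i ∧ a ∉ P i))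
         (fun i => b ∈ P i ∧ a ∉ P i) ∧
       Before σ (fun i => a ∈ P i ∧ b ∉ P i) (fun i => b ∈ P i ∧ a ∉ P i)) ∨
      (Before σ (fun i => b ∈ P i ∧ a ∉ P i)
         (fun i => ¬(a ∈ P i ∧ b ∉ P i) ∧ ¬(b ∈ P i ∧ a ∉ P i)) ∧
       Before σ (fun i => ¬(a ∈ P i ∧ b ∉ P i) ∧ ¬(b ∈ P i ∧ a ∉ P i))
         (fun i => a ∈ P i ∧ b ∉ P i) ∧
       Before σ (fun i => b ∈ P i ∧ a ∉ P i) (fun i => a ∈ P i ∧ b ∉ P i))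

lemma betw {n : ℕ} {P : Fin n → Finset C} {σ : Fin n → ℝ}
    (hσ : Cond P σ) {i j k : Fin n} (hij : σ i < σ j) (hjk : σ j < σ k) (a b : C) :
    min (lab (P i) a b) (lab (P k) a b) ≤ lab (P j) a b ∧
    lab (P j) a b ≤ max (lab (P i) a b) (lab (P k) a b) := by
  rcases lab_cases (P i) a b with ⟨hLi, hMi⟩ | ⟨hLi, hMi⟩ | ⟨hLi, hMi⟩ <;>
  rcases lab_cases (P j) a b with ⟨hLj, hMj⟩ | ⟨hLj, hMj⟩ | ⟨hLj, hMj⟩ <;>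
  rcases lab_cases (P k) a b with ⟨hLk, hMk⟩ | ⟨hLk, hMk⟩ | ⟨hLk, hMk⟩ <;>
  rw [hLi, hLj, hLk] <;>
  first
    | omega
    | (exfalso
       rcases hσ a b with ⟨h1, h2, h3⟩ | ⟨h1, h2, h3⟩ <;>
        first
          | linarith [h1 i j hMi hMj]
          | linarith [h1 j i hMj hMi]
          | linarith [h1 i k hMi hMk]
          | linarith [h1 k i hMk hMi]
          | linarith [h1 j k hMj hMk]
          | linarith [h1 k j hMk hMj]
          | linarith [h2 i j hMi hMj]
          | linarith [h2 j i hMj hMi]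
          | linarith [h2 i k hMi hMk]
          | linarith [h2 k i hMk hMi]
          | linarith [h2 j k hMj hMk]
          | linarith [h2 k j hMk hMj]
          | linarith [h3 i j hMi hMj]
          | linarith [h3 j i hMj hMi]
          | linarith [h3 i k hMi hMk]
          | linarith [h3 k i hMk hMi]
          | linarith [h3 j k hMj hMk]
          | linarith [h3 k j hMk hMj])

end A

section B
variable {C : Type*} [Fintype C] [DecidableEq C]

def Triv (s : Finset C) : Prop := s = ∅ ∨ s = Finset.univ

lemma nontriv_nonempty {s : Finset C} (h : ¬ Triv s) : s.Nonempty :=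
  Finset.nonempty_iff_ne_empty.mpr (fun h0 => h (Or.inl h0))

lemma nontriv_ne_univ {s : Finset C} (h : ¬ Triv s) : s ≠ Finset.univ :=
  fun h0 => h (Or.inr h0)

lemma triv_not_pair {s : Finset C} (h : Triv s) (a b : C) : ¬ (a ∈ s ∧ b ∉ s) := by
  rcases h with rfl | rfl
  · rintro ⟨h1, -⟩; exact Finset.notMem_empty a h1
  · rintro ⟨-, h2⟩; exact h2 (Finset.mem_univ b)

lemma exists_not_mem_of_ne_univ {s : Finset C} (h : s ≠ Finset.univ) : ∃ b, b ∉ s := by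
  by_contra hb; push_neg at hb; exact h (Finset.eq_univ_iff_forall.mpr hb)

lemma lab_eq_zero_iff {s : Finset C} {a b : C} : lab s a b = 0 ↔ (a ∈ s ∧ b ∉ s) := by
  unfold lab; split_ifs with h1 h2 <;> simp_all

lemma lab_eq_two_iff {s : Finset C} {a b : C} : lab s a b = 2 ↔ (b ∈ s ∧ a ∉ s) := by
  unfold lab; split_ifs with h1 h2 <;> simp_all

lemma lab_eq_one_iff {s : Finset C} {a b : C} : lab s a b = 1 ↔ (a ∈ s ↔ b ∈ s) := by
  unfold lab; split_ifs with h1 h2 <;> constructor <;> intro h <;> simp_all <;> tauto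

lemma lab_bounds (s : Finset C) (a b : C) : 0 ≤ lab s a b ∧ lab s a b ≤ 2 := by
  unfold lab; split_ifs <;> norm_num

lemma lab_triv {s : Finset C} (h : Triv s) (a b : C) : lab s a b = 1 := by
  rcases h with rfl | rfl <;> simp [lab]

lemma lab_congr {x y : Finset C} (h : SameWeakOrder x y) (a b : C) :
    lab x a b = lab y a b := by
  have h1 := h a b
  have h2 := h b a
  unfold lab
  by_cases hx : a ∈ x ∧ b ∉ x
  · rw [if_pos hx, if_pos (h1.mp hx)]
  · rw [if_neg hx, if_neg (fun hy => hx (h1.mpr hy))]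
    by_cases hx2 : b ∈ x ∧ a ∉ x
    · rw [if_pos hx2, if_pos (h2.mp hx2)]
    · rw [if_neg hx2, if_neg (fun hy => hx2 (h2.mpr hy))]

lemma lab_mono_inter (u w : Finset C) (a b : C) :
    (lab u a b ≤ lab (u ∩ w) a b ∧ lab (u ∩ w) a b ≤ lab w a b) ∨
    (lab w a b ≤ lab (u ∩ w) a b ∧ lab (u ∩ w) a b ≤ lab u a b) := by
  simp only [lab, Finset.mem_inter]
  split_ifs <;> first | omega | tauto

lemma lab_mono_union (u w : Finset C) (a b : C) :
    (lab u a b ≤ lab (u ∪ w) a b ∧ lab (u ∪ w) a b ≤ lab w a b) ∨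
    (lab w a b ≤ lab (u ∪ w) a b ∧ lab (u ∪ w) a b ≤ lab u a b) := by
  simp only [lab, Finset.mem_union]
  split_ifs <;> first | omega | tauto

lemma key {x y z : Finset C} (hy0 : y.Nonempty) (hyU : y ≠ Finset.univ)
    (hx0 : x.Nonempty) (hz0 : z.Nonempty) (hxy : x ≠ y) (hyz : y ≠ z)
    (H1 : ∀ c d : C, c ∈ x → d ∉ x → c ∈ z → d ∉ z → c ∈ y ∧ d ∉ y)
    (H2 : ∀ c d : C, (c ∈ x ↔ d ∈ x) → (c ∈ z ↔ d ∈ z) → (c ∈ y ↔ d ∈ y))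
    (H3 : ∀ c d : C, c ∈ x → d ∉ x → (c ∈ z ↔ d ∈ z) → ¬(d ∈ y ∧ c ∉ y))
    (H4 : ∀ c d : C, (c ∈ x ↔ d ∈ x) → c ∈ z → d ∉ z → ¬(d ∈ y ∧ c ∉ y)) :
    y = x ∩ z ∨ y = x ∪ z := by
  have sup : ∀ c, c ∈ x → c ∈ z → c ∈ y := by
    intro c hcx hcz
    by_contra hcy
    by_cases hU : ∃ d, d ∉ x ∧ d ∉ z
    · obtain ⟨d, hd1, hd2⟩ := hU
      exact hcy (H1 c d hcx hd1 hcz hd2).1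
    · push_neg at hU
      obtain ⟨e, he⟩ := hy0
      by_cases hex : e ∈ x <;> by_cases hez : e ∈ z
      · exact hcy ((H2 c e (iff_of_true hcx hex) (iff_of_true hcz hez)).mpr he)
      · exact H4 c e (iff_of_true hcx hex) hcz hez ⟨he, hcy⟩
      · exact H3 c e hcx hex (iff_of_true hcz hez) ⟨he, hcy⟩
      · exact hez (hU e hex)
  have sub : ∀ c, c ∈ y → c ∈ x ∨ c ∈ z := by
    intro c hcy
    by_contra hcon
    push_neg at hcon
    obtain ⟨hcx, hcz⟩ := hcon
    by_cases hI : ∃ e, e ∈ x ∧ e ∈ z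
    · obtain ⟨e, he1, he2⟩ := hI
      exact (H1 e c he1 hcx he2 hcz).2 hcy
    · obtain ⟨e, hex⟩ := hx0
      have hez : e ∉ z := fun h => hI ⟨e, hex, h⟩
      obtain ⟨f, hfz⟩ := hz0
      have hfx : f ∉ x := fun h => hI ⟨f, h, hfz⟩
      have hey : e ∈ y := by
        by_contra hey
        exact H3 e c hex hcx (iff_of_false hez hcz) ⟨hcy, hey⟩
      have hfy : f ∈ y := by
        by_contra hfy
        exact H4 f c (iff_of_false hfx hcx) hfz hcz ⟨hcy, hfy⟩
      apply hyU
      apply Finset.eq_univ_iff_forall.mpr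
      intro g
      by_cases hgx : g ∈ x <;> by_cases hgz : g ∈ z
      · exact sup g hgx hgz
      · exact (H2 g e (iff_of_true hgx hex) (iff_of_false hgz hez)).mpr hey
      · exact (H2 g f (iff_of_false hgx hfx) (iff_of_true hgz hfz)).mpr hfy
      · exact (H2 g c (iff_of_false hgx hcx) (iff_of_false hgz hcz)).mpr hcy
  by_cases q10 : ∀ c, c ∈ x → c ∉ z → c ∈ y <;>
    by_cases q01 : ∀ c, c ∈ z → c ∉ x → c ∈ y
  · right
    ext c
    constructor
    · intro hc
      rcases sub c hc with h | h
      · exact Finset.mem_union_left _ h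
      · exact Finset.mem_union_right _ h
    · intro hc
      rcases Finset.mem_union.mp hc with h | h
      · by_cases hz : c ∈ z
        · exact sup c h hz
        · exact q10 c h hz
      · by_cases hx : c ∈ x
        · exact sup c hx h
        · exact q01 c h hx
  · exfalso
    push_neg at q01
    obtain ⟨d, hdz, hdx, hdy⟩ := q01
    apply hxy
    ext c
    constructor
    · intro hc
      by_cases hcz : c ∈ z
      · exact sup c hc hcz
      · exact q10 c hc hcz
    · intro hc
      rcases sub c hc with h | h
      · exact h
      · by_cases hcx : c ∈ x
        · exact hcx
        · exact absurd ((H2 c d (iff_of_false hcx hdx) (iff_of_true h hdz)).mp hc) hdy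
  · exfalso
    push_neg at q10
    obtain ⟨d, hdx, hdz, hdy⟩ := q10
    apply hyz
    ext c
    constructor
    · intro hc
      rcases sub c hc with h | h
      · by_cases hcz : c ∈ z
        · exact hcz
        · exact absurd ((H2 c d (iff_of_true h hdx) (iff_of_false hcz hdz)).mp hc) hdy
      · exact h
    · intro hc
      by_cases hcx : c ∈ x
      · exact sup c hcx hc
      · exact q01 c hc hcx
  · left
    push_neg at q10
    push_neg at q01
    obtain ⟨d, hdx, hdz, hdy⟩ := q10
    obtain ⟨d', hdz', hdx', hdy'⟩ := q01
    ext c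
    rw [Finset.mem_inter]
    constructor
    · intro hc
      rcases sub c hc with h | h
      · refine ⟨h, ?_⟩
        by_contra hcz
        exact hdy ((H2 c d (iff_of_true h hdx) (iff_of_false hcz hdz)).mp hc)
      · refine ⟨?_, h⟩
        by_contra hcx
        exact hdy' ((H2 c d' (iff_of_false hcx hdx') (iff_of_true h hdz')).mp hc)
    · intro ⟨h1, h2⟩
      exact sup c h1 h2

end B

lemma real_sort3 (x y z : ℝ) (hxy : x ≠ y) (hxz : x ≠ z) (hyz : y ≠ z) :
    (x < y ∧ y < z) ∨ (x < z ∧ z < y) ∨ (y < x ∧ x < z) ∨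
    (y < z ∧ z < x) ∨ (z < x ∧ x < y) ∨ (z < y ∧ y < x) := by
  rcases lt_trichotomy x y with h1 | h1 | h1 <;>
  rcases lt_trichotomy y z with h2 | h2 | h2 <;>
  rcases lt_trichotomy x z with h3 | h3 | h3 <;>
  first | exact absurd h1 hxy | exact absurd h2 hyz | exact absurd h3 hxz | tauto

section Cc
variable {C : Type*} [Fintype C] [DecidableEq C] {n : ℕ} {P : Fin n → Finset C} {σ : Fin n → ℝ}

lemma three_mid (hσ : Cond P σ) {i j k : Fin n} (hij : σ i < σ j) (hjk : σ j < σ k)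
    (hnty : ¬ Triv (P j)) (hnex : (P i).Nonempty) (hnez : (P k).Nonempty)
    (hxy : P i ≠ P j) (hyz : P j ≠ P k) : P j = P i ∩ P k ∨ P j = P i ∪ P k := by
  apply key (nontriv_nonempty hnty) (nontriv_ne_univ hnty) hnex hnez hxy hyz
  · intro c d hcx hdx hcz hdz
    have h := betw hσ hij hjk c d
    rw [lab_eq_zero_iff.mpr ⟨hcx, hdx⟩, lab_eq_zero_iff.mpr ⟨hcz, hdz⟩] at h
    have hb := lab_bounds (P j) c d
    exact lab_eq_zero_iff.mp (by omega)
  · intro c d hx hz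
    have h := betw hσ hij hjk c d
    rw [lab_eq_one_iff.mpr hx, lab_eq_one_iff.mpr hz] at h
    exact lab_eq_one_iff.mp (by omega)
  · intro c d hcx hdx hz hB
    have h := betw hσ hij hjk c d
    rw [lab_eq_zero_iff.mpr ⟨hcx, hdx⟩, lab_eq_one_iff.mpr hz] at h
    have : lab (P j) c d = 2 := lab_eq_two_iff.mpr hB
    omega
  · intro c d hx hcz hdz hB
    have h := betw hσ hij hjk c d
    rw [lab_eq_one_iff.mpr hx, lab_eq_zero_iff.mpr ⟨hcz, hdz⟩] at h
    have : lab (P j) c d = 2 := lab_eq_two_iff.mpr hB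
    omega

lemma mid_triv (hσ : Cond P σ) {i j k : Fin n} (hij : σ i < σ j) (hjk : σ j < σ k)
    (htj : Triv (P j)) : P i ∩ P k = ∅ ∨ P i ∪ P k = Finset.univ := by
  by_contra hcon
  push_neg at hcon
  obtain ⟨h1, h2⟩ := hcon
  obtain ⟨c, hc⟩ := h1
  obtain ⟨d, hd⟩ := exists_not_mem_of_ne_univ h2
  rw [Finset.mem_inter] at hc
  simp only [Finset.mem_union, not_or] at hd
  have h := betw hσ hij hjk c d
  rw [lab_eq_zero_iff.mpr ⟨hc.1, hd.1⟩, lab_eq_zero_iff.mpr ⟨hc.2, hd.2⟩] at h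
  have hb := lab_bounds (P j) c d
  exact triv_not_pair htj c d (lab_eq_zero_iff.mp (by omega))

lemma mid_compl {x y : Finset C} (H2f : ∀ c d : C, (c ∈ x ↔ d ∈ x) → (c ∈ y ↔ d ∈ y))
    (hy0 : y.Nonempty) (hyU : y ≠ Finset.univ) (hyx : y ≠ x) : y = xᶜ := by
  obtain ⟨e, he⟩ := hy0
  by_cases hex : e ∈ x
  · exfalso
    have hx_sub : x ⊆ y := fun c hc => (H2f c e (iff_of_true hc hex)).mpr he
    by_cases h2 : ∃ f, f ∉ x ∧ f ∈ y
    · obtain ⟨f, hf1, hf2⟩ := h2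
      apply hyU
      apply Finset.eq_univ_iff_forall.mpr
      intro c
      by_cases hcx : c ∈ x
      · exact hx_sub hcx
      · exact (H2f c f (iff_of_false hcx hf1)).mpr hf2
    · push_neg at h2
      apply hyx
      apply Finset.Subset.antisymm (fun c hc => ?_) hx_sub
      by_contra hcx
      exact h2 c hcx hc
  · have hc_sub : ∀ g, g ∉ x → g ∈ y := fun g hg => (H2f g e (iff_of_false hg hex)).mpr he
    have hx_out : ∀ g, g ∈ x → g ∉ y := by
      intro g hgx hgy
      apply hyU
      apply Finset.eq_univ_iff_forall.mpr
      intro c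
      by_cases hcx : c ∈ x
      · exact (H2f c g (iff_of_true hcx hgx)).mpr hgy
      · exact hc_sub c hcx
    ext c
    rw [Finset.mem_compl]
    exact ⟨fun hcy hcx => hx_out c hcx hcy, hc_sub c⟩

lemma mid_compl_right (hσ : Cond P σ) {i j k : Fin n} (hij : σ i < σ j) (hjk : σ j < σ k)
    (htk : Triv (P k)) (hntj : ¬ Triv (P j)) (hji : P j ≠ P i) : P j = (P i)ᶜ := by
  apply mid_compl ?_ (nontriv_nonempty hntj) (nontriv_ne_univ hntj) hji
  intro c d hx
  have h := betw hσ hij hjk c d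
  rw [lab_eq_one_iff.mpr hx, lab_triv htk] at h
  exact lab_eq_one_iff.mp (by omega)

lemma mid_compl_left (hσ : Cond P σ) {i j k : Fin n} (hij : σ i < σ j) (hjk : σ j < σ k)
    (hti : Triv (P i)) (hntj : ¬ Triv (P j)) (hjk' : P j ≠ P k) : P j = (P k)ᶜ := by
  apply mid_compl ?_ (nontriv_nonempty hntj) (nontriv_ne_univ hntj) hjk'
  intro c d hx
  have h := betw hσ hij hjk c d
  rw [lab_eq_one_iff.mpr hx, lab_triv hti] at h
  exact lab_eq_one_iff.mp (by omega)

lemma two_plus_triv (hinj : Injective σ) (hσ : Cond P σ) (i j k : Fin n)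
    (hnti : ¬ Triv (P i)) (hntj : ¬ Triv (P j)) (hij : P i ≠ P j) (htk : Triv (P k)) :
    P i ∩ P j = ∅ ∨ P i ∪ P j = Finset.univ := by
  have hsij : σ i ≠ σ j := fun h => hij (congrArg P (hinj h))
  have hsik : σ i ≠ σ k := fun h => hnti ((congrArg P (hinj h)) ▸ htk)
  have hsjk : σ j ≠ σ k := fun h => hntj ((congrArg P (hinj h)) ▸ htk)
  rcases real_sort3 _ _ _ hsij hsik hsjk with
    ⟨h1, h2⟩ | ⟨h1, h2⟩ | ⟨h1, h2⟩ | ⟨h1, h2⟩ | ⟨h1, h2⟩ | ⟨h1, h2⟩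
  · left; rw [mid_compl_right hσ h1 h2 htk hntj hij.symm]; ext a; simp
  · exact mid_triv hσ h1 h2 htk
  · left; rw [mid_compl_right hσ h1 h2 htk hnti hij]; ext a; simp
  · rcases mid_triv hσ h1 h2 htk with h | h
    · left; rwa [Finset.inter_comm]
    · right; rwa [Finset.union_comm]
  · left; rw [mid_compl_left hσ h1 h2 htk hnti hij]; ext a; simp
  · left; rw [mid_compl_left hσ h1 h2 htk hntj hij.symm]; ext a; simp

lemma core4 (hσ : Cond P σ) {p q r s : Fin n}
    (h1 : σ p < σ q) (h2 : σ q < σ r) (h3 : σ r < σ s)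
    (np : ¬ Triv (P p)) (nq : ¬ Triv (P q)) (nr : ¬ Triv (P r)) (ns : ¬ Triv (P s))
    (dpq : P p ≠ P q) (dpr : P p ≠ P r) (dqr : P q ≠ P r)
    (dqs : P q ≠ P s) (drs : P r ≠ P s) : False := by
  have hq := three_mid hσ h1 (h2.trans h3) nq (nontriv_nonempty np) (nontriv_nonempty ns) dpq dqs
  have hr := three_mid hσ (h1.trans h2) h3 nr (nontriv_nonempty np) (nontriv_nonempty ns) dpr drs
  have hq3 := three_mid hσ h1 h2 nq (nontriv_nonempty np) (nontriv_nonempty nr) dpq dqr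
  rcases hq with hq | hq <;> rcases hr with hr | hr
  · exact dqr (hq.trans hr.symm)
  · -- P q = P p ∩ P s, P r = P p ∪ P s
    have hsub : P p ⊆ P r := hr ▸ Finset.subset_union_left
    rcases hq3 with h | h
    · exact dpq ((Finset.inter_eq_left.mpr hsub ▸ h : P q = P p)).symm
    · exact dqr (Finset.union_eq_right.mpr hsub ▸ h : P q = P r)
  · -- P q = P p ∪ P s, P r = P p ∩ P s
    have hsub : P r ⊆ P p := hr ▸ Finset.inter_subset_left
    rcases hq3 with h | h
    · exact dqr (Finset.inter_eq_right.mpr hsub ▸ h : P q = P r)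
    · exact dpq ((Finset.union_eq_left.mpr hsub ▸ h : P q = P p)).symm
  · exact dqr (hq.trans hr.symm)

end Cc

section SWO
variable {C : Type*} [Fintype C] [DecidableEq C]

lemma swo_refl (s : Finset C) : SameWeakOrder s s := fun _ _ => Iff.rfl

lemma swo_char {s t : Finset C} : SameWeakOrder s t ↔ (s = t ∨ (Triv s ∧ Triv t)) := by
  constructor
  · intro h
    by_cases hs : Triv s
    · refine Or.inr ⟨hs, ?_⟩
      by_contra ht
      have h1 : t ≠ ∅ := fun h0 => ht (Or.inl h0)
      have h2 : t ≠ Finset.univ := fun h0 => ht (Or.inr h0)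
      obtain ⟨a, ha⟩ := Finset.nonempty_iff_ne_empty.mpr h1
      obtain ⟨b, hb⟩ := exists_not_mem_of_ne_univ h2
      exact triv_not_pair hs a b ((h a b).mpr ⟨ha, hb⟩)
    · left
      have h1 : s ≠ ∅ := fun h0 => hs (Or.inl h0)
      have h2 : s ≠ Finset.univ := fun h0 => hs (Or.inr h0)
      obtain ⟨a0, ha0⟩ := Finset.nonempty_iff_ne_empty.mpr h1
      obtain ⟨b0, hb0⟩ := exists_not_mem_of_ne_univ h2
      have hb0t : b0 ∉ t := ((h a0 b0).mp ⟨ha0, hb0⟩).2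
      ext c
      exact ⟨fun hc => ((h c b0).mp ⟨hc, hb0⟩).1, fun hc => ((h c b0).mpr ⟨hc, hb0t⟩).1⟩
  · rintro (rfl | ⟨hs, ht⟩)
    · exact swo_refl _
    · intro a b
      exact ⟨fun hp => absurd hp (triv_not_pair hs a b),
             fun hp => absurd hp (triv_not_pair ht a b)⟩

end SWO

theorem stmt4 {C : Type*} [Fintype C] [DecidableEq C] {n : ℕ}
    (P : Fin n → Finset C) :
    WSC P ↔
      ∃ u v w : Finset C,
        (∀ i, SameWeakOrder (P i) u ∨ SameWeakOrder (P i) v ∨ SameWeakOrder (P i) w) ∧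
        (SameWeakOrder v (u ∩ w) ∨ SameWeakOrder v (u ∪ w)) := by
  constructor
  · -- forward direction
    rintro ⟨σ, hinj, hσ⟩
    classical
    have hσ' : Cond P σ := hσ
    by_cases hA : ∀ i, Triv (P i)
    · refine ⟨∅, ∅, ∅, fun i => Or.inl (swo_char.mpr (Or.inr ⟨hA i, Or.inl rfl⟩)), Or.inl ?_⟩
      rw [Finset.empty_inter]; exact swo_refl _
    · push_neg at hA
      obtain ⟨i0, h0⟩ := hA
      by_cases hB : ∀ i, ¬ Triv (P i) → P i = P i0
      · refine ⟨P i0, ∅, ∅, ?_, Or.inl ?_⟩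
        · intro i
          by_cases ht : Triv (P i)
          · exact Or.inr (Or.inl (swo_char.mpr (Or.inr ⟨ht, Or.inl rfl⟩)))
          · exact Or.inl (by rw [hB i ht]; exact swo_refl _)
        · rw [Finset.inter_empty]; exact swo_refl _
      · push_neg at hB
        obtain ⟨i1, hnt1, hne1⟩ := hB
        by_cases hC : ∀ i, ¬ Triv (P i) → P i = P i0 ∨ P i = P i1
        · by_cases htv : ∃ m, Triv (P m)
          · obtain ⟨m, htm⟩ := htv
            have hd := two_plus_triv hinj hσ' i0 i1 m h0 hnt1 (Ne.symm hne1) htm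
            refine ⟨P i0, ∅, P i1, ?_, ?_⟩
            · intro i
              by_cases ht : Triv (P i)
              · exact Or.inr (Or.inl (swo_char.mpr (Or.inr ⟨ht, Or.inl rfl⟩)))
              · rcases hC i ht with h | h
                · exact Or.inl (by rw [h]; exact swo_refl _)
                · exact Or.inr (Or.inr (by rw [h]; exact swo_refl _))
            · rcases hd with h | h
              · exact Or.inl (by rw [h]; exact swo_refl _)
              · exact Or.inr (swo_char.mpr (Or.inr ⟨Or.inl rfl, Or.inr h⟩))
          · push_neg at htv
            refine ⟨P i0, P i0 ∩ P i1, P i1, ?_, Or.inl (swo_refl _)⟩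
            intro i
            rcases hC i (htv i) with h | h
            · exact Or.inl (by rw [h]; exact swo_refl _)
            · exact Or.inr (Or.inr (by rw [h]; exact swo_refl _))
        · push_neg at hC
          obtain ⟨i2, hnt2, hne20, hne21⟩ := hC
          have d01 : P i0 ≠ P i1 := Ne.symm hne1
          have d10 : P i1 ≠ P i0 := hne1
          have d02 : P i0 ≠ P i2 := Ne.symm hne20
          have d20 : P i2 ≠ P i0 := hne20
          have d12 : P i1 ≠ P i2 := Ne.symm hne21
          have d21 : P i2 ≠ P i1 := hne21
          have s01 : σ i0 ≠ σ i1 := fun h => d01 (congrArg P (hinj h))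
          have s02 : σ i0 ≠ σ i2 := fun h => d02 (congrArg P (hinj h))
          have s12 : σ i1 ≠ σ i2 := fun h => d12 (congrArg P (hinj h))
          by_cases hD : ∀ i, ¬ Triv (P i) → P i = P i0 ∨ P i = P i1 ∨ P i = P i2
          · have FIN : ∀ p q r : Fin n, σ p < σ q → σ q < σ r →
                ¬ Triv (P p) → ¬ Triv (P q) → ¬ Triv (P r) →
                P p ≠ P q → P q ≠ P r →
                (∀ i, Triv (P i) ∨ P i = P p ∨ P i = P q ∨ P i = P r) →
                ∃ u v w : Finset C,
                  (∀ i, SameWeakOrder (P i) u ∨ SameWeakOrder (P i) v ∨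
                    SameWeakOrder (P i) w) ∧
                  (SameWeakOrder v (u ∩ w) ∨ SameWeakOrder v (u ∪ w)) := by
              intro p q r hpq hqr np nq nr dpq dqr hcov
              have hmid := three_mid hσ' hpq hqr nq (nontriv_nonempty np)
                (nontriv_nonempty nr) dpq dqr
              by_cases htv : ∃ m, Triv (P m)
              · exfalso
                obtain ⟨m, htm⟩ := htv
                have hd := two_plus_triv hinj hσ' p q m np nq dpq htm
                rcases hmid with h | h
                · have hsub : P q ⊆ P p := h ▸ Finset.inter_subset_left
                  rcases hd with h' | h'
                  · exact (nontriv_nonempty nq).ne_empty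
                      (by rwa [Finset.inter_eq_right.mpr hsub] at h')
                  · exact (nontriv_ne_univ np)
                      (by rwa [Finset.union_eq_left.mpr hsub] at h')
                · have hsub : P p ⊆ P q := h ▸ Finset.subset_union_left
                  rcases hd with h' | h'
                  · exact (nontriv_nonempty np).ne_empty
                      (by rwa [Finset.inter_eq_left.mpr hsub] at h')
                  · exact (nontriv_ne_univ nq)
                      (by rwa [Finset.union_eq_right.mpr hsub] at h')
              · push_neg at htv
                refine ⟨P p, P q, P r, ?_, ?_⟩
                · intro i
                  rcases hcov i with h | h | h | h
                  · exact absurd h (htv i)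
                  · exact Or.inl (by rw [h]; exact swo_refl _)
                  · exact Or.inr (Or.inl (by rw [h]; exact swo_refl _))
                  · exact Or.inr (Or.inr (by rw [h]; exact swo_refl _))
                · rcases hmid with h | h
                  · exact Or.inl (by rw [← h]; exact swo_refl _)
                  · exact Or.inr (by rw [← h]; exact swo_refl _)
            have hcov : ∀ i, Triv (P i) ∨ P i = P i0 ∨ P i = P i1 ∨ P i = P i2 := by
              intro i
              by_cases ht : Triv (P i)
              · exact Or.inl ht
              · exact Or.inr (hD i ht)
            rcases real_sort3 (σ i0) (σ i1) (σ i2) s01 s02 s12 with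
              ⟨h1, h2⟩ | ⟨h1, h2⟩ | ⟨h1, h2⟩ | ⟨h1, h2⟩ | ⟨h1, h2⟩ | ⟨h1, h2⟩
            · exact FIN i0 i1 i2 h1 h2 h0 hnt1 hnt2 d01 d12
                (fun i => by rcases hcov i with h | h | h | h <;> tauto)
            · exact FIN i0 i2 i1 h1 h2 h0 hnt2 hnt1 d02 d21
                (fun i => by rcases hcov i with h | h | h | h <;> tauto)
            · exact FIN i1 i0 i2 h1 h2 hnt1 h0 hnt2 d10 d02
                (fun i => by rcases hcov i with h | h | h | h <;> tauto)
            · exact FIN i1 i2 i0 h1 h2 hnt1 hnt2 h0 d12 d20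
                (fun i => by rcases hcov i with h | h | h | h <;> tauto)
            · exact FIN i2 i0 i1 h1 h2 hnt2 h0 hnt1 d20 d01
                (fun i => by rcases hcov i with h | h | h | h <;> tauto)
            · exact FIN i2 i1 i0 h1 h2 hnt2 hnt1 h0 d21 d10
                (fun i => by rcases hcov i with h | h | h | h <;> tauto)
          · exfalso
            push_neg at hD
            obtain ⟨i3, hnt3, hd30, hd31, hd32⟩ := hD
            have d30 : P i3 ≠ P i0 := hd30
            have d03 : P i0 ≠ P i3 := Ne.symm hd30
            have d31 : P i3 ≠ P i1 := hd31
            have d13 : P i1 ≠ P i3 := Ne.symm hd31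
            have d32 : P i3 ≠ P i2 := hd32
            have d23 : P i2 ≠ P i3 := Ne.symm hd32
            have s30 : σ i3 ≠ σ i0 := fun h => d30 (congrArg P (hinj h))
            have s31 : σ i3 ≠ σ i1 := fun h => d31 (congrArg P (hinj h))
            have s32 : σ i3 ≠ σ i2 := fun h => d32 (congrArg P (hinj h))
            have hnt0 := h0
            rcases real_sort3 (σ i0) (σ i1) (σ i2) s01 s02 s12 with
              ⟨h1, h2⟩ | ⟨h1, h2⟩ | ⟨h1, h2⟩ | ⟨h1, h2⟩ | ⟨h1, h2⟩ | ⟨h1, h2⟩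
            · rcases lt_trichotomy (σ i3) (σ i0) with h4 | h4 | h4
              · apply core4 hσ' h4 h1 h2 <;> assumption
              · exact s30 h4
              · rcases lt_trichotomy (σ i3) (σ i1) with h5 | h5 | h5
                · apply core4 hσ' h4 h5 h2 <;> assumption
                · exact s31 h5
                · rcases lt_trichotomy (σ i3) (σ i2) with h6 | h6 | h6
                  · apply core4 hσ' h1 h5 h6 <;> assumption
                  · exact s32 h6
                  · apply core4 hσ' h1 h2 h6 <;> assumption
            · rcases lt_trichotomy (σ i3) (σ i0) with h4 | h4 | h4
              · apply core4 hσ' h4 h1 h2 <;> assumption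
              · exact s30 h4
              · rcases lt_trichotomy (σ i3) (σ i2) with h5 | h5 | h5
                · apply core4 hσ' h4 h5 h2 <;> assumption
                · exact s32 h5
                · rcases lt_trichotomy (σ i3) (σ i1) with h6 | h6 | h6
                  · apply core4 hσ' h1 h5 h6 <;> assumption
                  · exact s31 h6
                  · apply core4 hσ' h1 h2 h6 <;> assumption
            · rcases lt_trichotomy (σ i3) (σ i1) with h4 | h4 | h4
              · apply core4 hσ' h4 h1 h2 <;> assumption
              · exact s31 h4
              · rcases lt_trichotomy (σ i3) (σ i0) with h5 | h5 | h5
                · apply core4 hσ' h4 h5 h2 <;> assumption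
                · exact s30 h5
                · rcases lt_trichotomy (σ i3) (σ i2) with h6 | h6 | h6
                  · apply core4 hσ' h1 h5 h6 <;> assumption
                  · exact s32 h6
                  · apply core4 hσ' h1 h2 h6 <;> assumption
            · rcases lt_trichotomy (σ i3) (σ i1) with h4 | h4 | h4
              · apply core4 hσ' h4 h1 h2 <;> assumption
              · exact s31 h4
              · rcases lt_trichotomy (σ i3) (σ i2) with h5 | h5 | h5
                · apply core4 hσ' h4 h5 h2 <;> assumption
                · exact s32 h5
                · rcases lt_trichotomy (σ i3) (σ i0) with h6 | h6 | h6
                  · apply core4 hσ' h1 h5 h6 <;> assumption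
                  · exact s30 h6
                  · apply core4 hσ' h1 h2 h6 <;> assumption
            · rcases lt_trichotomy (σ i3) (σ i2) with h4 | h4 | h4
              · apply core4 hσ' h4 h1 h2 <;> assumption
              · exact s32 h4
              · rcases lt_trichotomy (σ i3) (σ i0) with h5 | h5 | h5
                · apply core4 hσ' h4 h5 h2 <;> assumption
                · exact s30 h5
                · rcases lt_trichotomy (σ i3) (σ i1) with h6 | h6 | h6
                  · apply core4 hσ' h1 h5 h6 <;> assumption
                  · exact s31 h6
                  · apply core4 hσ' h1 h2 h6 <;> assumption
            · rcases lt_trichotomy (σ i3) (σ i2) with h4 | h4 | h4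
              · apply core4 hσ' h4 h1 h2 <;> assumption
              · exact s32 h4
              · rcases lt_trichotomy (σ i3) (σ i1) with h5 | h5 | h5
                · apply core4 hσ' h4 h5 h2 <;> assumption
                · exact s31 h5
                · rcases lt_trichotomy (σ i3) (σ i0) with h6 | h6 | h6
                  · apply core4 hσ' h1 h5 h6 <;> assumption
                  · exact s30 h6
                  · apply core4 hσ' h1 h2 h6 <;> assumption
  · -- backward direction
    rintro ⟨u, v, w, hcov, hv⟩
    classical
    obtain ⟨T, hmatch⟩ : ∃ T : Fin n → ℕ, ∀ i,
        (T i = 0 ∧ SameWeakOrder (P i) u) ∨ (T i = 1 ∧ SameWeakOrder (P i) v) ∨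
        (T i = 2 ∧ SameWeakOrder (P i) w) := by
      refine ⟨fun i => if SameWeakOrder (P i) u then 0
        else if SameWeakOrder (P i) v then 1 else 2, fun i => ?_⟩
      by_cases hu : SameWeakOrder (P i) u
      · exact Or.inl ⟨if_pos hu, hu⟩
      · by_cases hv' : SameWeakOrder (P i) v
        · exact Or.inr (Or.inl ⟨(if_neg hu).trans (if_pos hv'), hv'⟩)
        · rcases hcov i with h | h | h
          · exact absurd h hu
          · exact absurd h hv'
          · exact Or.inr (Or.inr ⟨(if_neg hu).trans (if_neg hv'), h⟩)
    have hT2 : ∀ i, T i ≤ 2 := fun i => by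
      rcases hmatch i with ⟨h, -⟩ | ⟨h, -⟩ | ⟨h, -⟩ <;> omega
    set σ : Fin n → ℝ := fun i => ((T i * n + (i : ℕ) : ℕ) : ℝ) with hσdef
    have hnat : ∀ i j : Fin n, T i < T j → T i * n + (i : ℕ) < T j * n + (j : ℕ) := by
      intro i j h
      have hi : (i : ℕ) < n := i.isLt
      calc T i * n + (i : ℕ) < T i * n + n := by omega
        _ = (T i + 1) * n := by ring
        _ ≤ T j * n := Nat.mul_le_mul_right n h
        _ ≤ T j * n + (j : ℕ) := Nat.le_add_right _ _
    have hblock : ∀ i j : Fin n, T i < T j → σ i < σ j := by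
      intro i j h
      have h2 := hnat i j h
      show ((T i * n + (i : ℕ) : ℕ) : ℝ) < ((T j * n + (j : ℕ) : ℕ) : ℝ)
      exact_mod_cast h2
    have hinj : Injective σ := by
      intro i j h
      have h0 : ((T i * n + (i : ℕ) : ℕ) : ℝ) = ((T j * n + (j : ℕ) : ℕ) : ℝ) := h
      have h' : T i * n + (i : ℕ) = T j * n + (j : ℕ) := Nat.cast_injective h0
      have hi : (i : ℕ) < n := i.isLt
      have hj : (j : ℕ) < n := j.isLt
      have h2i := hT2 i
      have h2j := hT2 j
      have ei : T i = 0 ∨ T i = 1 ∨ T i = 2 := by omega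
      have ej : T j = 0 ∨ T j = 1 ∨ T j = 2 := by omega
      have hv : (i : ℕ) = (j : ℕ) := by
        rcases ei with e | e | e <;> rcases ej with e' | e' | e' <;>
          rw [e, e'] at h' <;> omega
      exact Fin.ext hv
    refine ⟨σ, hinj, ?_⟩
    intro a b
    have hchain : (lab u a b ≤ lab v a b ∧ lab v a b ≤ lab w a b) ∨
        (lab w a b ≤ lab v a b ∧ lab v a b ≤ lab u a b) := by
      rcases hv with h | h
      · have he := lab_congr h a b
        rcases lab_mono_inter u w a b with ⟨x1, x2⟩ | ⟨x1, x2⟩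
        · exact Or.inl ⟨by rw [he]; exact x1, by rw [he]; exact x2⟩
        · exact Or.inr ⟨by rw [he]; exact x1, by rw [he]; exact x2⟩
      · have he := lab_congr h a b
        rcases lab_mono_union u w a b with ⟨x1, x2⟩ | ⟨x1, x2⟩
        · exact Or.inl ⟨by rw [he]; exact x1, by rw [he]; exact x2⟩
        · exact Or.inr ⟨by rw [he]; exact x1, by rw [he]; exact x2⟩
    have hlabT : ∀ i : Fin n, lab (P i) a b =
        (if T i = 0 then lab u a b else if T i = 1 then lab v a b else lab w a b) := by
      intro i
      rcases hmatch i with ⟨h, hs⟩ | ⟨h, hs⟩ | ⟨h, hs⟩ <;>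
        rw [h, lab_congr hs a b] <;> norm_num
    rcases hchain with ⟨c1, c2⟩ | ⟨c1, c2⟩
    · left
      have hkey : ∀ i j : Fin n, lab (P i) a b < lab (P j) a b → σ i < σ j := by
        intro i j hlt
        rw [hlabT i, hlabT j] at hlt
        have h2i := hT2 i
        have h2j := hT2 j
        have ei : T i = 0 ∨ T i = 1 ∨ T i = 2 := by omega
        have ej : T j = 0 ∨ T j = 1 ∨ T j = 2 := by omega
        rcases ei with e | e | e <;> rcases ej with e' | e' | e' <;>
          rw [e, e'] at hlt <;> norm_num at hlt <;>
          first
            | exact hblock i j (by omega)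
            | linarith
      refine ⟨?_, ?_, ?_⟩
      · intro i j hi hj
        apply hkey
        have e1 : lab (P i) a b = 0 := lab_eq_zero_iff.mpr hi
        have e2 : lab (P j) a b = 1 := lab_eq_one_iff.mpr (by tauto)
        omega
      · intro i j hi hj
        apply hkey
        have e1 : lab (P i) a b = 1 := lab_eq_one_iff.mpr (by tauto)
        have e2 : lab (P j) a b = 2 := lab_eq_two_iff.mpr hj
        omega
      · intro i j hi hj
        apply hkey
        have e1 : lab (P i) a b = 0 := lab_eq_zero_iff.mpr hi
        have e2 : lab (P j) a b = 2 := lab_eq_two_iff.mpr hj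
        omega
    · right
      have hkey : ∀ i j : Fin n, lab (P j) a b < lab (P i) a b → σ i < σ j := by
        intro i j hlt
        rw [hlabT i, hlabT j] at hlt
        have h2i := hT2 i
        have h2j := hT2 j
        have ei : T i = 0 ∨ T i = 1 ∨ T i = 2 := by omega
        have ej : T j = 0 ∨ T j = 1 ∨ T j = 2 := by omega
        rcases ei with e | e | e <;> rcases ej with e' | e' | e' <;>
          rw [e, e'] at hlt <;> norm_num at hlt <;>
          first
            | exact hblock i j (by omega)
            | linarith
      refine ⟨?_, ?_, ?_⟩
      · intro i j hi hj
        apply hkey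
        have e1 : lab (P i) a b = 2 := lab_eq_two_iff.mpr hi
        have e2 : lab (P j) a b = 1 := lab_eq_one_iff.mpr (by tauto)
        omega
      · intro i j hi hj
        apply hkey
        have e1 : lab (P i) a b = 1 := lab_eq_one_iff.mpr (by tauto)
        have e2 : lab (P j) a b = 0 := lab_eq_zero_iff.mpr hj
        omega
      · intro i j hi hj
        apply hkey
        have e1 : lab (P i) a b = 2 := lab_eq_two_iff.mpr hi
        have e2 : lab (P j) a b = 0 := lab_eq_zero_iff.mpr hj
        omega
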